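/- Let Σ and Λ be real d×d positive semidefinite matrices with unit diagonal, and let f_1,…,f_d and g_1,…,g_d be strictly increasing continuous bijections from ℝ to ℝ. Let P be the pushforward of the centered multivariate Gaussian N_d(0, Σ) under z ↦ (f_1^{−1}(z_1),…,f_d^{−1}(z_d)) and Q the pushforward of N_d(0, Λ) under z ↦ (g_1^{−1}(z_1),…,g_d^{−1}(z_d)), and assume P and Q have finite second moments. Define the squared nonparanormal transport distance d_NPT²(P,Q) = Σ_{j=1}^d d_W²(P_j, Q_j) + Tr[Σ + Λ − 2 (Σ^{1/2} Λ Σ^{1/2})^{1/2}], where P_j and Q_j denote the j-th coordinate marginals of P and Q. If d_NPT²(P,Q) = 0, then P = Q. -/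

import Mathlib

open MeasureTheory ProbabilityTheory Matrix
open scoped Classical

/-- The unique positive semidefinite square root of a positive semidefinite real matrix
(junk value `0` if the matrix is not positive semidefinite). -/
noncomputable def psdSqrt {d : ℕ} (M : Matrix (Fin d) (Fin d) ℝ) : Matrix (Fin d) (Fin d) ℝ :=
  if h : M.PosSemidef then
    (h.1.eigenvectorUnitary : Matrix (Fin d) (Fin d) ℝ) *
      diagonal ((↑) ∘ (Real.sqrt ·) ∘ h.1.eigenvalues) *
      (star h.1.eigenvectorUnitary : Matrix (Fin d) (Fin d) ℝ)
  else 0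

/-- The squared Bures distance `Tr[A + B − 2 (A^{1/2} B A^{1/2})^{1/2}]`. -/
noncomputable def buresSq {d : ℕ} (A B : Matrix (Fin d) (Fin d) ℝ) : ℝ :=
  (A + B - 2 • psdSqrt (psdSqrt A * B * psdSqrt A)).trace

/-- Squared 2-Wasserstein distance between Borel probability measures on ℝ:
the infimum over couplings `γ` of `∫ |x − y|² dγ`. -/
noncomputable def W2sq (P Q : Measure ℝ) : ℝ :=
  sInf { r : ℝ | ∃ γ : Measure (ℝ × ℝ), IsProbabilityMeasure γ ∧
    γ.map Prod.fst = P ∧ γ.map Prod.snd = Q ∧ r = ∫ p, (p.1 - p.2) ^ 2 ∂γ }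

/-- The multivariate Gaussian measure `N_d(m, S)` on ℝ^d with mean `m` and positive
semidefinite covariance `S`, realized as the pushforward of the standard Gaussian
under `x ↦ m + S^{1/2} x`. -/
noncomputable def gaussianPi (d : ℕ) (m : Fin d → ℝ) (S : Matrix (Fin d) (Fin d) ℝ) :
    Measure (Fin d → ℝ) :=
  (Measure.pi fun _ : Fin d => gaussianReal 0 1).map fun x => m + (psdSqrt S).mulVec x

section Aux
open Matrix MeasureTheory ProbabilityTheory Set
variable {d : ℕ}

noncomputable def Matrix.PosSemidef.sqrt {M : Matrix (Fin d) (Fin d) ℝ} (h : M.PosSemidef) :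
    Matrix (Fin d) (Fin d) ℝ :=
  (h.1.eigenvectorUnitary : Matrix (Fin d) (Fin d) ℝ) *
    diagonal ((↑) ∘ (Real.sqrt ·) ∘ h.1.eigenvalues) *
    (star h.1.eigenvectorUnitary : Matrix (Fin d) (Fin d) ℝ)

lemma Matrix.PosSemidef.posSemidef_sqrt {M : Matrix (Fin d) (Fin d) ℝ} (h : M.PosSemidef) :
    h.sqrt.PosSemidef := by
  unfold Matrix.PosSemidef.sqrt
  have hD : (diagonal ((↑) ∘ (Real.sqrt ·) ∘ h.1.eigenvalues) : Matrix (Fin d) (Fin d) ℝ).PosSemidef :=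
    PosSemidef.diagonal fun i => by simp [Real.sqrt_nonneg]
  have := hD.mul_mul_conjTranspose_same (h.1.eigenvectorUnitary : Matrix (Fin d) (Fin d) ℝ)
  rwa [← Matrix.star_eq_conjTranspose] at this

lemma Matrix.PosSemidef.sqrt_mul_self {M : Matrix (Fin d) (Fin d) ℝ} (h : M.PosSemidef) :
    h.sqrt * h.sqrt = M := by
  have hs := h.1.spectral_theorem
  rw [Unitary.conjStarAlgAut_apply, RCLike.ofReal_real_eq_id, Function.id_comp] at hs
  have hU : star (h.1.eigenvectorUnitary : Matrix (Fin d) (Fin d) ℝ) *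
      (h.1.eigenvectorUnitary : Matrix (Fin d) (Fin d) ℝ) = 1 :=
    mem_unitaryGroup_iff'.mp h.1.eigenvectorUnitary.2
  unfold Matrix.PosSemidef.sqrt
  conv_rhs => rw [hs]
  simp only [Matrix.mul_assoc]
  rw [← Matrix.mul_assoc (star _) _, hU, Matrix.one_mul, ← Matrix.mul_assoc (diagonal _),
    diagonal_mul_diagonal]
  congr 2
  funext i j
  rw [diagonal_apply, diagonal_apply]
  split_ifs <;> simp [Real.mul_self_sqrt (h.eigenvalues_nonneg i)]

lemma psd_trace_nonneg {X : Matrix (Fin d) (Fin d) ℝ} (hX : X.PosSemidef) : 0 ≤ X.trace := by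
  exact hX.trace_nonneg

lemma trace_ct_mul_self_eq_zero {X : Matrix (Fin d) (Fin d) ℝ} (h : (Xᴴ * X).trace = 0) :
    X = 0 := by
  rw [Matrix.trace] at h
  have hij : ∀ i j, X i j = 0 := by
    have hdiag : ∀ j ∈ Finset.univ, (0:ℝ) ≤ (Xᴴ * X).diag j := by
      intro j _
      simp only [Matrix.diag, Matrix.mul_apply, Matrix.conjTranspose_apply, star_trivial]
      exact Finset.sum_nonneg fun i _ => mul_self_nonneg _
    have := (Finset.sum_eq_zero_iff_of_nonneg hdiag).mp h
    intro i j
    have hj := this j (Finset.mem_univ j)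
    simp only [Matrix.diag, Matrix.mul_apply, Matrix.conjTranspose_apply, star_trivial] at hj
    have := (Finset.sum_eq_zero_iff_of_nonneg (fun i _ => mul_self_nonneg (X i j))).mp hj i
      (Finset.mem_univ i)
    exact mul_self_eq_zero.mp this
  ext i j; exact hij i j

lemma psd_trace_eq_zero {X : Matrix (Fin d) (Fin d) ℝ} (hX : X.PosSemidef)
    (h : X.trace = 0) : X = 0 := by
  have hR : hX.sqrt ᴴ * hX.sqrt = X := by
    rw [hX.posSemidef_sqrt.1, hX.sqrt_mul_self]
  have : hX.sqrt = 0 := trace_ct_mul_self_eq_zero (by rw [hR]; exact h)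
  rw [← hX.sqrt_mul_self, this, mul_zero]


lemma psdSqrt_of_posSemidef {M : Matrix (Fin d) (Fin d) ℝ} (h : M.PosSemidef) :
    psdSqrt M = h.sqrt := by rw [psdSqrt, dif_pos h]; rfl

lemma bures_key {S L : Matrix (Fin d) (Fin d) ℝ} (hS : S.PosSemidef) (hL : L.PosSemidef) :
    0 ≤ buresSq S L ∧ (buresSq S L = 0 → S = L) := by
  set A := hS.sqrt with hA
  set B := hL.sqrt with hB
  have hAh : Aᴴ = A := hS.posSemidef_sqrt.1
  have hBh : Bᴴ = B := hL.posSemidef_sqrt.1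
  have hAA : A * A = S := hS.sqrt_mul_self
  have hBB : B * B = L := hL.sqrt_mul_self
  set M := B * A with hM
  have hMct : Mᴴ = A * B := by rw [hM, conjTranspose_mul, hAh, hBh]
  have hG : (psdSqrt S * L * psdSqrt S).PosSemidef := by
    rw [psdSqrt_of_posSemidef hS, ← hA]
    have : A * L * A = Mᴴ * M := by rw [hMct, hM, ← hBB]; noncomm_ring
    rw [this]
    exact posSemidef_conjTranspose_mul_self M
  set C := hG.sqrt with hC
  have hCpsd : C.PosSemidef := hG.posSemidef_sqrt
  have hCh : C.IsHermitian := hCpsd.1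
  have hCC : C * C = Mᴴ * M := by
    rw [hC, hG.sqrt_mul_self, psdSqrt_of_posSemidef hS, ← hA, hMct, hM, ← hBB]; noncomm_ring
  -- spectral decomposition of C
  set V : Matrix (Fin d) (Fin d) ℝ := (hCh.eigenvectorUnitary : Matrix (Fin d) (Fin d) ℝ)
    with hV
  set e : Fin d → ℝ := hCh.eigenvalues with he
  have hVV : star V * V = 1 := mem_unitaryGroup_iff'.mp hCh.eigenvectorUnitary.2
  have hVV' : V * star V = 1 := mem_unitaryGroup_iff.mp hCh.eigenvectorUnitary.2
  have hspec : C = V * (diagonal e * star V) := by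
    have := hCh.spectral_theorem
    rw [Unitary.conjStarAlgAut_apply, RCLike.ofReal_real_eq_id, Function.id_comp] at this
    rw [this, Matrix.mul_assoc]
  -- rewrite system helpers
  have r1 : ∀ X : Matrix (Fin d) (Fin d) ℝ, star V * (V * X) = X := fun X => by
    rw [← Matrix.mul_assoc, hVV, Matrix.one_mul]
  have r2 : ∀ X : Matrix (Fin d) (Fin d) ℝ, V * (star V * X) = X := fun X => by
    rw [← Matrix.mul_assoc, hVV', Matrix.one_mul]
  have r5 : ∀ (a b : Fin d → ℝ) (X : Matrix (Fin d) (Fin d) ℝ),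
      diagonal a * (diagonal b * X) = diagonal (fun i => a i * b i) * X := fun a b X => by
    rw [← Matrix.mul_assoc, diagonal_mul_diagonal]
  have r4 : ∀ X : Matrix (Fin d) (Fin d) ℝ,
      Mᴴ * (M * X) = V * (diagonal (fun i => e i * e i) * (star V * X)) := fun X => by
    have h1 : Mᴴ * M = V * (diagonal (fun i => e i * e i) * star V) := by
      rw [← hCC]
      conv_lhs => rw [hspec]
      simp only [Matrix.mul_assoc, r1, r2, r5]
    rw [← Matrix.mul_assoc, h1]
    simp only [Matrix.mul_assoc]
  set p : Fin d → ℝ := fun i => if e i = 0 then 0 else (e i)⁻¹ with hp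
  set U := M * (V * (diagonal p * star V)) with hU
  have hstarp : star p = p := funext fun i => star_trivial _
  have hUct : Uᴴ = V * (diagonal p * (star V * Mᴴ)) := by
    rw [hU, conjTranspose_mul, conjTranspose_mul, conjTranspose_mul]
    rw [show (star V)ᴴ = V from by rw [← Matrix.star_eq_conjTranspose, star_star]]
    rw [diagonal_conjTranspose, hstarp, ← Matrix.star_eq_conjTranspose]
    simp only [Matrix.mul_assoc]
  have hMM : Mᴴ * M = V * (diagonal (fun i => e i * e i) * star V) := by
    rw [← hCC]
    conv_lhs => rw [hspec]
    simp only [Matrix.mul_assoc, r1, r2, r5]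
  have r4 : ∀ X : Matrix (Fin d) (Fin d) ℝ,
      Mᴴ * (M * X) = V * (diagonal (fun i => e i * e i) * (star V * X)) := fun X => by
    rw [← Matrix.mul_assoc, hMM]
    simp only [Matrix.mul_assoc]
  have hUM : Uᴴ * M = C := by
    rw [hUct]
    simp only [Matrix.mul_assoc, hMM, r1, r5]
    rw [show (fun i => p i * (e i * e i)) = e from funext fun i => by
      by_cases h : e i = 0
      · simp [hp, h]
      · rw [hp]; dsimp only; rw [if_neg h]; field_simp]
    exact hspec.symm
  set W := U * Uᴴ with hW
  have hWform : W = M * (V * (diagonal (fun i => p i * p i) * (star V * Mᴴ))) := by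
    rw [hW, hU, hUct]
    simp only [Matrix.mul_assoc, r1, r5]
  have hWW : W * W = W := by
    rw [hWform]
    simp only [Matrix.mul_assoc, r4, r1, r5]
    congr 4
    funext i
    by_cases h : e i = 0
    · simp [hp, h]
    · rw [hp]; dsimp only; rw [if_neg h]; field_simp
  have hWh : Wᴴ = W := (posSemidef_self_mul_conjTranspose U).1
  have h1W : (1 - W).PosSemidef := by
    have h1Wh : (1 - W)ᴴ = 1 - W := by rw [conjTranspose_sub, conjTranspose_one, hWh]
    have hid : (1 - W)ᴴ * (1 - W) = 1 - W := by
      rw [h1Wh]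
      calc (1 - W) * (1 - W) = 1 - W - W + W * W := by noncomm_ring
      _ = 1 - W := by rw [hWW]; abel
    rw [← hid]
    exact posSemidef_conjTranspose_mul_self _
  -- trace bookkeeping
  set X := A - B * U with hX
  have hXct : Xᴴ = A - Uᴴ * B := by
    rw [hX, conjTranspose_sub, conjTranspose_mul, hAh, hBh]
  have hexp : Xᴴ * X = A * A - A * (B * U) - Uᴴ * (B * A) + Uᴴ * (B * (B * U)) := by
    rw [hXct, hX]; noncomm_ring
  have t2 : (A * (B * U)).trace = C.trace := by
    have h1 : A * (B * U) = (Uᴴ * M)ᴴ := by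
      rw [conjTranspose_mul, conjTranspose_conjTranspose, hMct]; noncomm_ring
    rw [h1, hUM, hCh.eq]
  have t3 : (Uᴴ * (B * A)).trace = C.trace := by rw [← hM, hUM]
  have t4 : (Uᴴ * (B * (B * U))).trace = (B * W * B).trace := by
    rw [trace_mul_comm, show B * (B * U) * Uᴴ = B * (B * W) from by rw [hW]; noncomm_ring,
      trace_mul_comm]
  have hPSD_Y : (B * (1 - W) * B).PosSemidef := by
    have := h1W.mul_mul_conjTranspose_same B
    rwa [hBh] at this
  have hYtr : (B * (1 - W) * B).trace = L.trace - (B * W * B).trace := by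
    rw [show B * (1 - W) * B = B * B - B * W * B from by noncomm_ring, trace_sub, hBB]
  have hXtr : (Xᴴ * X).trace = S.trace + (B * W * B).trace - 2 * C.trace := by
    rw [hexp, trace_add, trace_sub, trace_sub, t2, t3, t4, hAA]; ring
  have hbures : buresSq S L = S.trace + L.trace - 2 * C.trace := by
    simp only [buresSq, psdSqrt_of_posSemidef hG, ← hC]
    rw [trace_sub, trace_add, trace_smul]
    push_cast
    ring
  have hkey : buresSq S L = (Xᴴ * X).trace + (B * (1 - W) * B).trace := by
    rw [hbures, hXtr, hYtr]; ring
  have hxnn : 0 ≤ (Xᴴ * X).trace := psd_trace_nonneg (posSemidef_conjTranspose_mul_self X)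
  have hynn : 0 ≤ (B * (1 - W) * B).trace := psd_trace_nonneg hPSD_Y
  constructor
  · linarith [hkey]
  · intro h0
    have hx : (Xᴴ * X).trace = 0 := by linarith
    have hy : (B * (1 - W) * B).trace = 0 := by linarith
    have hX0 : X = 0 := trace_ct_mul_self_eq_zero hx
    have hABU : A = B * U := by
      have := sub_eq_zero.mp (hX ▸ hX0)
      exact this
    have hS' : S = B * W * B := by
      have h1 : S = A * Aᴴ := by rw [hAh, hAA]
      rw [h1, hABU, conjTranspose_mul, hBh, hW]
      noncomm_ring
    have hY0 : B * (1 - W) * B = 0 := psd_trace_eq_zero hPSD_Y hy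
    have hL' : L = B * W * B := by
      have h1 : B * B - B * W * B = 0 := by rw [← hY0]; noncomm_ring
      rw [← hBB]
      exact sub_eq_zero.mp h1
    rw [hS', hL']

lemma W2sq_nonneg (P Q : Measure ℝ) : 0 ≤ W2sq P Q := by
  refine Real.sInf_nonneg fun r hr => ?_
  obtain ⟨γ, _, _, _, hr⟩ := hr
  rw [hr]
  exact integral_nonneg fun p => sq_nonneg _

lemma cdf_le_of_couplings (P Q : Measure ℝ) [IsProbabilityMeasure P] [IsProbabilityMeasure Q]
    (hP2 : Integrable (fun x => x ^ 2) P) (hQ2 : Integrable (fun x => x ^ 2) Q)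
    (h : ∀ ε > (0:ℝ), ∃ γ : Measure (ℝ × ℝ), IsProbabilityMeasure γ ∧
      γ.map Prod.fst = P ∧ γ.map Prod.snd = Q ∧ ∫ p, (p.1 - p.2) ^ 2 ∂γ < ε)
    (t : ℝ) : P (Set.Iic t) ≤ Q (Set.Iic t) := by
  suffices hδ : ∀ δ > (0:ℝ), P (Set.Iic t) ≤ Q (Set.Iic (t + δ)) by
    refine le_of_le_of_eq ?_ (Set.measure_eq_iInf_isOpen _ Q).symm
    simp only [le_iInf_iff]
    intro U hU hUopen
    obtain ⟨ε, hε, hball⟩ := Metric.isOpen_iff.mp hUopen t (hU (mem_Iic.mpr le_rfl))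
    refine le_trans (hδ (ε/2) (by linarith)) (measure_mono fun x hx => ?_)
    rcases le_or_gt x t with hxt | hxt
    · exact hU hxt
    · refine hball ?_
      simp only [Metric.mem_ball, Real.dist_eq, abs_lt]
      simp only [Set.mem_Iic] at hx
      constructor <;> linarith
  intro δ hδ
  have hkey : ∀ ε > (0:ℝ), (P (Set.Iic t)).toReal ≤ (Q (Set.Iic (t + δ))).toReal + ε / δ ^ 2 := by
    intro ε hε
    obtain ⟨γ, hγ, hfst, hsnd, hcost⟩ := h ε hε
    have hmf : AEMeasurable Prod.fst γ := measurable_fst.aemeasurable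
    have hms : AEMeasurable Prod.snd γ := measurable_snd.aemeasurable
    have hfst2 : Integrable (fun p : ℝ × ℝ => p.1 ^ 2) γ := by
      rw [← hfst] at hP2
      exact (integrable_map_measure ((continuous_pow 2).aestronglyMeasurable) hmf).mp hP2
    have hsnd2 : Integrable (fun p : ℝ × ℝ => p.2 ^ 2) γ := by
      rw [← hsnd] at hQ2
      exact (integrable_map_measure ((continuous_pow 2).aestronglyMeasurable) hms).mp hQ2
    have hcostInt : Integrable (fun p : ℝ × ℝ => (p.1 - p.2) ^ 2) γ := by
      refine Integrable.mono ((hfst2.const_mul 2).add (hsnd2.const_mul 2))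
        (((continuous_fst.sub continuous_snd).pow 2).aestronglyMeasurable) ?_
      refine ae_of_all _ fun p => ?_
      rw [Real.norm_eq_abs, Real.norm_eq_abs, abs_of_nonneg (sq_nonneg _)]
      have h1 : (p.1 - p.2)^2 ≤ 2 * p.1^2 + 2 * p.2^2 := by nlinarith [sq_nonneg (p.1 + p.2)]
      exact h1.trans (le_abs_self _)
    have hmarkov := mul_meas_ge_le_integral_of_nonneg
      (ae_of_all γ (fun p : ℝ × ℝ => sq_nonneg (p.1 - p.2))) hcostInt (δ ^ 2)
    have hδ2 : (0:ℝ) < δ ^ 2 := by positivity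
    have hmeasB : (γ {p : ℝ × ℝ | δ ^ 2 ≤ (p.1 - p.2) ^ 2}).toReal ≤ ε / δ ^ 2 := by
      rw [le_div_iff₀ hδ2]
      calc (γ {p : ℝ × ℝ | δ ^ 2 ≤ (p.1 - p.2) ^ 2}).toReal * δ ^ 2
          = δ ^ 2 * (γ {p : ℝ × ℝ | δ ^ 2 ≤ (p.1 - p.2) ^ 2}).toReal := by ring
      _ ≤ ε := hmarkov.trans hcost.le
    have hPt : P (Set.Iic t) = γ {p : ℝ × ℝ | p.1 ≤ t} := by
      rw [← hfst, Measure.map_apply measurable_fst measurableSet_Iic]; rfl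
    have hQt : γ {p : ℝ × ℝ | p.2 ≤ t + δ} = Q (Set.Iic (t + δ)) := by
      rw [← hsnd, Measure.map_apply measurable_snd measurableSet_Iic]; rfl
    have hsub : {p : ℝ × ℝ | p.1 ≤ t} ⊆ {p : ℝ × ℝ | p.2 ≤ t + δ}
        ∪ {p : ℝ × ℝ | δ ^ 2 ≤ (p.1 - p.2) ^ 2} := by
      intro p hp
      rcases le_or_gt p.2 (t + δ) with h' | h'
      · exact Or.inl h'
      · right
        simp only [mem_setOf_eq] at *
        nlinarith
    have hle : γ {p : ℝ × ℝ | p.1 ≤ t} ≤ γ {p : ℝ × ℝ | p.2 ≤ t + δ}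
        + γ {p : ℝ × ℝ | δ ^ 2 ≤ (p.1 - p.2) ^ 2} :=
      (measure_mono hsub).trans (measure_union_le _ _)
    have htr : (γ {p : ℝ × ℝ | p.1 ≤ t}).toReal ≤ (γ {p : ℝ × ℝ | p.2 ≤ t + δ}).toReal
        + (γ {p : ℝ × ℝ | δ ^ 2 ≤ (p.1 - p.2) ^ 2}).toReal := by
      rw [← ENNReal.toReal_add (measure_ne_top _ _) (measure_ne_top _ _)]
      exact ENNReal.toReal_mono (by finiteness) hle
    rw [hPt, ← hQt]
    linarith
  have hreal : (P (Set.Iic t)).toReal ≤ (Q (Set.Iic (t + δ))).toReal := by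
    by_contra hcon
    push_neg at hcon
    have hδ2 : (0:ℝ) < δ ^ 2 := by positivity
    set x := (P (Set.Iic t)).toReal
    set y := (Q (Set.Iic (t + δ))).toReal
    have h1 := hkey ((x - y) / 2 * δ ^ 2) (mul_pos (by linarith) hδ2)
    rw [mul_div_assoc, div_self (ne_of_gt (by positivity : (0:ℝ) < δ ^ 2)), mul_one] at h1
    linarith
  exact (ENNReal.toReal_le_toReal (measure_ne_top _ _) (measure_ne_top _ _)).mp hreal

lemma w2sq_eq_zero {P Q : Measure ℝ} [IsProbabilityMeasure P] [IsProbabilityMeasure Q]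
    (hP2 : Integrable (fun x => x ^ 2) P) (hQ2 : Integrable (fun x => x ^ 2) Q)
    (h : W2sq P Q = 0) : P = Q := by
  have hexists : ∀ ε > (0:ℝ), ∃ γ : Measure (ℝ × ℝ), IsProbabilityMeasure γ ∧
      γ.map Prod.fst = P ∧ γ.map Prod.snd = Q ∧ ∫ p, (p.1 - p.2) ^ 2 ∂γ < ε := by
    intro ε hε
    have hne : { r : ℝ | ∃ γ : Measure (ℝ × ℝ), IsProbabilityMeasure γ ∧
        γ.map Prod.fst = P ∧ γ.map Prod.snd = Q ∧ r = ∫ p, (p.1 - p.2) ^ 2 ∂γ }.Nonempty := by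
      refine ⟨∫ p, (p.1 - p.2) ^ 2 ∂(P.prod Q), P.prod Q, inferInstance, ?_, ?_, rfl⟩
      · simp [Measure.map_fst_prod]
      · simp [Measure.map_snd_prod]
    have hbdd : BddBelow { r : ℝ | ∃ γ : Measure (ℝ × ℝ), IsProbabilityMeasure γ ∧
        γ.map Prod.fst = P ∧ γ.map Prod.snd = Q ∧ r = ∫ p, (p.1 - p.2) ^ 2 ∂γ } := by
      refine ⟨0, fun r hr => ?_⟩
      obtain ⟨γ, _, _, _, hr⟩ := hr
      rw [hr]
      exact integral_nonneg fun p => sq_nonneg _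
    have hlt : sInf { r : ℝ | ∃ γ : Measure (ℝ × ℝ), IsProbabilityMeasure γ ∧
        γ.map Prod.fst = P ∧ γ.map Prod.snd = Q ∧ r = ∫ p, (p.1 - p.2) ^ 2 ∂γ } < ε := by
      have : W2sq P Q < ε := by rw [h]; exact hε
      exact this
    obtain ⟨r, hrmem, hrlt⟩ := (csInf_lt_iff hbdd hne).mp hlt
    obtain ⟨γ, h1, h2, h3, h4⟩ := hrmem
    exact ⟨γ, h1, h2, h3, h4 ▸ hrlt⟩
  have hswap : ∀ ε > (0:ℝ), ∃ γ : Measure (ℝ × ℝ), IsProbabilityMeasure γ ∧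
      γ.map Prod.fst = Q ∧ γ.map Prod.snd = P ∧ ∫ p, (p.1 - p.2) ^ 2 ∂γ < ε := by
    intro ε hε
    obtain ⟨γ, hγ, h2, h3, h4⟩ := hexists ε hε
    refine ⟨γ.map Prod.swap, Measure.isProbabilityMeasure_map measurable_swap.aemeasurable, ?_, ?_, ?_⟩
    · rw [Measure.map_map measurable_fst measurable_swap]
      exact h3
    · rw [Measure.map_map measurable_snd measurable_swap]
      exact h2
    · rw [integral_map (f := fun p : ℝ × ℝ => (p.1 - p.2) ^ 2) measurable_swap.aemeasurable
        (((continuous_fst.sub continuous_snd).pow 2).aestronglyMeasurable)]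
      simp only [Prod.fst_swap, Prod.snd_swap]
      rw [show (fun x : ℝ × ℝ => (x.2 - x.1) ^ 2) = fun x : ℝ × ℝ => (x.1 - x.2) ^ 2 from
        funext fun x => by ring]
      exact h4
  refine MeasureTheory.Measure.ext_of_Iic P Q fun a => le_antisymm ?_ ?_
  · exact cdf_le_of_couplings P Q hP2 hQ2 hexists a
  · exact cdf_le_of_couplings Q P hQ2 hP2 hswap a

lemma mono_transport_side {μ : Measure ℝ} [IsProbabilityMeasure μ] {h k : ℝ → ℝ}
    (hhm : StrictMono h) (hkm : StrictMono k) (hhc : Continuous h) (hkc : Continuous k)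
    (heq : μ.map h = μ.map k) : μ {t | h t < k t} = 0 := by
  have hhmeas : Measurable h := hhc.measurable
  have hkmeas : Measurable k := hkc.measurable
  have key : ∀ q : ℚ, (μ.map h) (Ioc (h q) (k q)) = 0 := by
    intro q
    rcases lt_or_ge (h q) (k q) with hlt | hle
    · have h1 : (μ.map h) (Iic (h q)) = μ (Iic (q : ℝ)) := by
        rw [Measure.map_apply hhmeas measurableSet_Iic]
        congr 1
        ext x
        simp [hhm.le_iff_le]
      have h2 : (μ.map h) (Iic (k q)) = μ (Iic (q : ℝ)) := by
        rw [heq, Measure.map_apply hkmeas measurableSet_Iic]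
        congr 1
        ext x
        simp [hkm.le_iff_le]
      have h3 : Ioc (h q) (k q) = Iic (k q) \ Iic (h q) := (Iic_sdiff_Iic).symm
      rw [h3, measure_diff (Iic_subset_Iic.mpr hlt.le)
        measurableSet_Iic.nullMeasurableSet (measure_ne_top _ _), h1, h2, tsub_self]
    · rw [Ioc_eq_empty (not_lt.mpr hle), measure_empty]
  have hN : (μ.map h) (⋃ q : ℚ, Ioc (h q) (k q)) = 0 := measure_iUnion_null key
  have hNmeas : MeasurableSet (⋃ q : ℚ, Ioc (h q) (k q)) :=
    MeasurableSet.iUnion fun q => measurableSet_Ioc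
  have hsub : {t | h t < k t} ⊆ h ⁻¹' (⋃ q : ℚ, Ioc (h q) (k q)) := by
    intro t ht
    have hev : ∀ᶠ s in nhds t, h t < k s :=
      Filter.Tendsto.eventually_const_lt ht (hkc.tendsto t)
    obtain ⟨δ, hδpos, hball⟩ := Metric.eventually_nhds_iff.mp hev
    obtain ⟨q, hq1, hq2⟩ := exists_rat_btwn (show t - δ < t by linarith)
    refine Set.mem_preimage.mpr (Set.mem_iUnion.mpr ⟨q, ?_, ?_⟩)
    · exact hhm hq2
    · refine (hball (show dist (q:ℝ) t < δ by
        rw [Real.dist_eq, abs_lt]; constructor <;> linarith)).le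
  refine le_antisymm ?_ zero_le
  calc μ {t | h t < k t} ≤ μ (h ⁻¹' (⋃ q : ℚ, Ioc (h q) (k q))) := measure_mono hsub
  _ = (μ.map h) (⋃ q : ℚ, Ioc (h q) (k q)) := (Measure.map_apply hhmeas hNmeas).symm
  _ = 0 := hN

lemma mono_transport_ae {μ : Measure ℝ} [IsProbabilityMeasure μ] {h k : ℝ → ℝ}
    (hhm : StrictMono h) (hkm : StrictMono k) (hhc : Continuous h) (hkc : Continuous k)
    (heq : μ.map h = μ.map k) : h =ᵐ[μ] k := by
  have h1 := mono_transport_side hhm hkm hhc hkc heq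
  have h2 := mono_transport_side hkm hhm hkc hhc heq.symm
  rw [Filter.EventuallyEq, ae_iff]
  refine measure_mono_null (fun t ht => ?_) (measure_union_null h1 h2)
  simp only [mem_setOf_eq] at ht ⊢
  rcases lt_trichotomy (h t) (k t) with hc | hc | hc
  · exact Or.inl hc
  · exact absurd hc ht
  · exact Or.inr hc

lemma invFun_strictMono {f : ℝ → ℝ} (h1 : StrictMono f) (h3 : Function.Bijective f) :
    StrictMono (Function.invFun f) ∧ Continuous (Function.invFun f) := by
  set e : ℝ ≃o ℝ := StrictMono.orderIsoOfSurjective f h1 h3.2 with he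
  have hfe : Function.invFun f = ⇑e.symm := by
    funext y
    refine h3.1 ?_
    rw [Function.invFun_eq (h3.2 y)]
    have : ⇑e = f := StrictMono.coe_orderIsoOfSurjective f h1 h3.2
    rw [← this]
    exact (e.apply_symm_apply y).symm
  rw [hfe]
  exact ⟨e.symm.strictMono, OrderIso.continuous e.symm⟩

end Aux

/-- identity of indiscernibles for the squared nonparanormal transport distance
`d_NPT²(P,Q) = ∑_j d_W²(P_j, Q_j) + Tr[Σ + Λ − 2 (Σ^{1/2} Λ Σ^{1/2})^{1/2}]`:
if `d_NPT²(P,Q) = 0` for nonparanormal `P, Q` with finite second moments, then `P = Q`. -/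
theorem stmt15 (d : ℕ) (S L : Matrix (Fin d) (Fin d) ℝ)
    (hS : S.PosSemidef) (hL : L.PosSemidef)
    (hSd : ∀ j, S j j = 1) (hLd : ∀ j, L j j = 1)
    (f g : Fin d → ℝ → ℝ)
    (hf₁ : ∀ j, StrictMono (f j)) (hf₂ : ∀ j, Continuous (f j))
    (hf₃ : ∀ j, Function.Bijective (f j))
    (hg₁ : ∀ j, StrictMono (g j)) (hg₂ : ∀ j, Continuous (g j))
    (hg₃ : ∀ j, Function.Bijective (g j))
    (P Q : Measure (Fin d → ℝ))
    (hP : P = (gaussianPi d 0 S).map fun z i => Function.invFun (f i) (z i))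
    (hQ : Q = (gaussianPi d 0 L).map fun z i => Function.invFun (g i) (z i))
    (hP2 : Integrable (fun x => ∑ j, (x j) ^ 2) P)
    (hQ2 : Integrable (fun x => ∑ j, (x j) ^ 2) Q)
    (h0 : ∑ j, W2sq (P.map fun x => x j) (Q.map fun x => x j) + buresSq S L = 0) :
    P = Q := by
  subst hP hQ
  -- properties of the inverse functions
  have hmono : ∀ j, StrictMono (Function.invFun (f j)) :=
    fun j => (invFun_strictMono (hf₁ j) (hf₃ j)).1
  have hcont : ∀ j, Continuous (Function.invFun (f j)) :=
    fun j => (invFun_strictMono (hf₁ j) (hf₃ j)).2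
  have kmono : ∀ j, StrictMono (Function.invFun (g j)) :=
    fun j => (invFun_strictMono (hg₁ j) (hg₃ j)).1
  have kcont : ∀ j, Continuous (Function.invFun (g j)) :=
    fun j => (invFun_strictMono (hg₁ j) (hg₃ j)).2
  have hmeasH : Measurable (fun z : Fin d → ℝ => fun i => Function.invFun (f i) (z i)) :=
    measurable_pi_lambda _ fun i => (hcont i).measurable.comp (measurable_pi_apply i)
  have hmeasK : Measurable (fun z : Fin d → ℝ => fun i => Function.invFun (g i) (z i)) :=
    measurable_pi_lambda _ fun i => (kcont i).measurable.comp (measurable_pi_apply i)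
  -- probability measure instances
  have hmv : ∀ M : Matrix (Fin d) (Fin d) ℝ,
      Measurable (fun x : Fin d → ℝ => (0 : Fin d → ℝ) + M.mulVec x) := by
    intro M
    refine Measurable.add measurable_const ?_
    refine measurable_pi_lambda _ fun i => ?_
    simp only [Matrix.mulVec, dotProduct]
    exact Finset.measurable_sum _ fun l _ => (measurable_pi_apply l).const_mul _
  haveI hνS : IsProbabilityMeasure (gaussianPi d 0 S) := by
    unfold gaussianPi
    exact Measure.isProbabilityMeasure_map (hmv _).aemeasurable
  haveI hνL : IsProbabilityMeasure (gaussianPi d 0 L) := by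
    unfold gaussianPi
    exact Measure.isProbabilityMeasure_map (hmv _).aemeasurable
  haveI hPprob :
      IsProbabilityMeasure ((gaussianPi d 0 S).map fun z i => Function.invFun (f i) (z i)) :=
    Measure.isProbabilityMeasure_map hmeasH.aemeasurable
  haveI hQprob :
      IsProbabilityMeasure ((gaussianPi d 0 L).map fun z i => Function.invFun (g i) (z i)) :=
    Measure.isProbabilityMeasure_map hmeasK.aemeasurable
  -- second moments of the marginals
  have hmom : ∀ (P' : Measure (Fin d → ℝ)), Integrable (fun x : Fin d → ℝ => ∑ j, (x j) ^ 2) P' →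
      ∀ j, Integrable (fun x : ℝ => x ^ 2) (P'.map fun x => x j) := by
    intro P' hInt j
    refine (integrable_map_measure (f := fun x : Fin d → ℝ => x j) (g := fun x : ℝ => x ^ 2)
      ((continuous_pow 2).aestronglyMeasurable)
      (measurable_pi_apply j).aemeasurable).mpr ?_
    refine hInt.mono ((measurable_pi_apply j).pow_const 2).aestronglyMeasurable
      (ae_of_all _ fun x => ?_)
    rw [Real.norm_eq_abs, Real.norm_eq_abs, abs_of_nonneg (sq_nonneg _),
      abs_of_nonneg (Finset.sum_nonneg fun i _ => sq_nonneg (x i))]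
    exact Finset.single_le_sum (fun i _ => sq_nonneg (x i)) (Finset.mem_univ j)
  -- splitting the vanishing sum
  have hb := bures_key hS hL
  have hwnn : ∀ j ∈ Finset.univ, (0:ℝ) ≤
      W2sq (((gaussianPi d 0 S).map fun z i => Function.invFun (f i) (z i)).map fun x => x j)
        (((gaussianPi d 0 L).map fun z i => Function.invFun (g i) (z i)).map fun x => x j) :=
    fun j _ => W2sq_nonneg _ _
  have hsumnn := Finset.sum_nonneg hwnn
  have hb0 : buresSq S L = 0 := by linarith [hb.1]
  have hsum0 : ∑ j,
      W2sq (((gaussianPi d 0 S).map fun z i => Function.invFun (f i) (z i)).map fun x => x j)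
        (((gaussianPi d 0 L).map fun z i => Function.invFun (g i) (z i)).map fun x => x j)
      = 0 := by linarith [hb.1]
  have hSL : S = L := hb.2 hb0
  subst hSL
  have hterm := (Finset.sum_eq_zero_iff_of_nonneg hwnn).mp hsum0
  -- marginal identities
  have hPj : ∀ j, (((gaussianPi d 0 S).map fun z i => Function.invFun (f i) (z i)).map
      fun x => x j)
      = ((gaussianPi d 0 S).map fun z : Fin d → ℝ => z j).map (Function.invFun (f j)) := by
    intro j
    rw [Measure.map_map (measurable_pi_apply j) hmeasH,
      Measure.map_map (hcont j).measurable (measurable_pi_apply j)]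
    rfl
  have hQj : ∀ j, (((gaussianPi d 0 S).map fun z i => Function.invFun (g i) (z i)).map
      fun x => x j)
      = ((gaussianPi d 0 S).map fun z : Fin d → ℝ => z j).map (Function.invFun (g j)) := by
    intro j
    rw [Measure.map_map (measurable_pi_apply j) hmeasK,
      Measure.map_map (kcont j).measurable (measurable_pi_apply j)]
    rfl
  -- equal marginals from vanishing Wasserstein terms
  have heqj : ∀ j, ((gaussianPi d 0 S).map fun z : Fin d → ℝ => z j).map (Function.invFun (f j))
      = ((gaussianPi d 0 S).map fun z : Fin d → ℝ => z j).map (Function.invFun (g j)) := by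
    intro j
    rw [← hPj j, ← hQj j]
    haveI : IsProbabilityMeasure
        (((gaussianPi d 0 S).map fun z i => Function.invFun (f i) (z i)).map fun x => x j) :=
      Measure.isProbabilityMeasure_map (measurable_pi_apply j).aemeasurable
    haveI : IsProbabilityMeasure
        (((gaussianPi d 0 S).map fun z i => Function.invFun (g i) (z i)).map fun x => x j) :=
      Measure.isProbabilityMeasure_map (measurable_pi_apply j).aemeasurable
    exact w2sq_eq_zero (hmom _ hP2 j) (hmom _ hQ2 j) (hterm j (Finset.mem_univ j))
  -- a.e. equality of the transport maps
  have hae : ∀ j, ∀ᵐ z ∂(gaussianPi d 0 S),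
      Function.invFun (f j) (z j) = Function.invFun (g j) (z j) := by
    intro j
    haveI : IsProbabilityMeasure ((gaussianPi d 0 S).map fun z : Fin d → ℝ => z j) :=
      Measure.isProbabilityMeasure_map (measurable_pi_apply j).aemeasurable
    have h1 : Function.invFun (f j) =ᵐ[(gaussianPi d 0 S).map fun z : Fin d → ℝ => z j]
        Function.invFun (g j) :=
      mono_transport_ae (hmono j) (kmono j) (hcont j) (kcont j) (heqj j)
    exact (ae_map_iff (measurable_pi_apply j).aemeasurable
      ((isClosed_eq (hcont j) (kcont j)).measurableSet)).mp h1
  have hHK : (fun z : Fin d → ℝ => fun i => Function.invFun (f i) (z i))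
      =ᵐ[gaussianPi d 0 S] (fun z i => Function.invFun (g i) (z i)) := by
    have hall : ∀ᵐ z ∂(gaussianPi d 0 S), ∀ j,
        Function.invFun (f j) (z j) = Function.invFun (g j) (z j) := ae_all_iff.mpr hae
    filter_upwards [hall] with z hz
    funext i
    exact hz i
  exact Measure.map_congr hHK
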